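/- Let R̄: {1,2,…} → (0,∞) be a nonincreasing function (average per-user data rate), and let r̄(σ_{-i}) = Σ_{m=0}^{n−1} P_{-i}(m)·R̄(m+1), where P_{-i}(m) is the Poisson-binomial probability that exactly m of the other n−1 users connect, with independent connection probabilities σ_j, j ≠ i. Then r̄ is nonincreasing in each coordinate σ_j: if σ_j ≤ σ_j' (all other coordinates equal), then r̄(...,σ_j',...) ≤ r̄(...,σ_j,...). -/

import Mathlib

open Finset

/-- Poisson-binomial probability that exactly m of the other users connect. -/
def poissonBinom {n : ℕ} (σ : Fin n → ℝ) (m : ℕ) : ℝ :=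
  ∑ S ∈ Finset.univ.powersetCard m,
    (∏ j ∈ S, σ j) * ∏ j ∈ Sᶜ, (1 - σ j)

/-- Expected data rate r̄(σ) = Σ_{m=0}^{n} P(m)·R̄(m+1). -/
def expRate {n : ℕ} (Rbar : ℕ → ℝ) (σ : Fin n → ℝ) : ℝ :=
  ∑ m ∈ Finset.range (n + 1), poissonBinom σ m * Rbar (m + 1)

def Qpb {n : ℕ} (σ : Fin n → ℝ) (j : Fin n) (m : ℕ) : ℝ :=
  ∑ S ∈ ((Finset.univ.erase j).powersetCard m),
    (∏ i ∈ S, σ i) * ∏ i ∈ (Finset.univ.erase j) \ S, (1 - σ i)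

lemma pb_update {n : ℕ} (σ : Fin n → ℝ) (j : Fin n) (t : ℝ) (m : ℕ) :
    poissonBinom (Function.update σ j t) m
      = (1 - t) * Qpb σ j m + t * (if m = 0 then 0 else Qpb σ j (m - 1)) := by
  have hj : j ∉ Finset.univ.erase j := Finset.notMem_erase j _
  have huniv : (Finset.univ : Finset (Fin n)) = insert j (Finset.univ.erase j) :=
    (Finset.insert_erase (Finset.mem_univ j)).symm
  have hprodσ : ∀ S : Finset (Fin n), j ∉ S →
      ∏ i ∈ S, Function.update σ j t i = ∏ i ∈ S, σ i := fun S hS =>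
    Finset.prod_congr rfl fun i hi => Function.update_of_ne (by rintro rfl; exact hS hi) _ _
  have hprod1 : ∀ S : Finset (Fin n), j ∉ S →
      ∏ i ∈ S, (1 - Function.update σ j t i) = ∏ i ∈ S, (1 - σ i) := fun S hS =>
    Finset.prod_congr rfl fun i hi => by
      rw [Function.update_of_ne (by rintro rfl; exact hS hi)]
  cases m with
  | zero =>
    simp only [poissonBinom, Qpb, mul_zero, add_zero, reduceIte,
      Finset.powersetCard_zero, Finset.sum_singleton, Finset.prod_empty, one_mul,
      Finset.sdiff_empty, Finset.compl_empty]
    rw [← Finset.mul_prod_erase Finset.univ _ (Finset.mem_univ j), Function.update_self,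
      hprod1 _ hj]
  | succ m =>
    have hjmem : ∀ S ∈ (Finset.univ.erase j).powersetCard (m+1), j ∉ S := by
      intro S hS hjS
      exact hj ((Finset.mem_powersetCard.1 hS).1 hjS)
    have hjmem' : ∀ S ∈ (Finset.univ.erase j).powersetCard m, j ∉ S := by
      intro S hS hjS
      exact hj ((Finset.mem_powersetCard.1 hS).1 hjS)
    rw [poissonBinom]
    have hsplit := Finset.powersetCard_succ_insert hj m
    rw [← huniv] at hsplit
    rw [hsplit]
    have hdisj : Disjoint ((Finset.univ.erase j).powersetCard (m+1))
        (Finset.image (insert j) ((Finset.univ.erase j).powersetCard m)) := by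
      rw [Finset.disjoint_left]
      intro S hS hS'
      obtain ⟨T, hT, rfl⟩ := Finset.mem_image.1 hS'
      exact hjmem _ hS (Finset.mem_insert_self j T)
    rw [Finset.sum_union hdisj]
    have h1 : ∑ S ∈ (Finset.univ.erase j).powersetCard (m+1),
        (∏ i ∈ S, Function.update σ j t i) * ∏ i ∈ Sᶜ, (1 - Function.update σ j t i)
        = (1 - t) * Qpb σ j (m+1) := by
      rw [Qpb, Finset.mul_sum]
      refine Finset.sum_congr rfl fun S hS => ?_
      have hjS := hjmem S hS
      have hcompl : Sᶜ = insert j (Finset.univ.erase j \ S) := by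
        ext x
        simp only [Finset.mem_compl, Finset.mem_insert, Finset.mem_sdiff,
          Finset.mem_erase, Finset.mem_univ, and_true, true_and]
        constructor
        · intro hx
          by_cases hxj : x = j
          · exact Or.inl hxj
          · exact Or.inr ⟨hxj, hx⟩
        · rintro (rfl | ⟨_, hx⟩)
          · exact hjS
          · exact hx
      rw [hprodσ S hjS, hcompl, Finset.prod_insert (by simp), Function.update_self,
        hprod1 _ (by simp)]
      ring
    have h2 : ∑ S ∈ Finset.image (insert j) ((Finset.univ.erase j).powersetCard m),
        (∏ i ∈ S, Function.update σ j t i) * ∏ i ∈ Sᶜ, (1 - Function.update σ j t i)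
        = t * Qpb σ j m := by
      rw [Finset.sum_image (by
        intro T hT T' hT' hins
        have : (insert j T).erase j = (insert j T').erase j := by rw [hins]
        rwa [Finset.erase_insert (hjmem' _ hT), Finset.erase_insert (hjmem' _ hT')] at this)]
      rw [Qpb, Finset.mul_sum]
      refine Finset.sum_congr rfl fun T hT => ?_
      have hjT := hjmem' T hT
      have hsub := (Finset.mem_powersetCard.1 hT).1
      have hcompl : (insert j T)ᶜ = Finset.univ.erase j \ T := by
        ext x
        simp only [Finset.mem_compl, Finset.mem_insert, Finset.mem_sdiff,
          Finset.mem_erase, Finset.mem_univ, and_true, true_and]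
        tauto
      rw [Finset.prod_insert hjT, Function.update_self, hprodσ T hjT, hcompl,
        hprod1 _ (by simp)]
      ring
    rw [h1, h2]
    simp

/-- Congestion effect: the expected data rate is nonincreasing in each of
the other users' connection probabilities. -/
theorem stmt_14 (n : ℕ) (Rbar : ℕ → ℝ)
    (hpos : ∀ k, 0 < Rbar k)
    (hmono : ∀ a b : ℕ, a ≤ b → Rbar b ≤ Rbar a)
    (σ : Fin n → ℝ) (hσ : ∀ j, σ j ∈ Set.Icc (0:ℝ) 1)
    (j : Fin n) (s' : ℝ) (hs' : s' ∈ Set.Icc (0:ℝ) 1) (h : σ j ≤ s') :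
    expRate Rbar (Function.update σ j s') ≤ expRate Rbar σ := by
  have hQnonneg : ∀ m, 0 ≤ Qpb σ j m := by
    intro m
    refine Finset.sum_nonneg fun S _ => mul_nonneg
      (Finset.prod_nonneg fun i _ => (hσ i).1)
      (Finset.prod_nonneg fun i _ => by linarith [(hσ i).2])
  have hQn : Qpb σ j n = 0 := by
    rw [Qpb, Finset.powersetCard_eq_empty.2, Finset.sum_empty]
    rw [Finset.card_erase_of_mem (Finset.mem_univ j), Finset.card_univ, Fintype.card_fin]
    have := j.isLt
    omega
  set A : ℝ := ∑ m ∈ Finset.range (n+1), Qpb σ j m * Rbar (m+1) with hA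
  set B : ℝ := ∑ k ∈ Finset.range n, Qpb σ j k * Rbar (k+2) with hB
  have key : ∀ t : ℝ, expRate Rbar (Function.update σ j t) = A + t * (B - A) := by
    intro t
    rw [expRate]
    have step : ∀ m ∈ Finset.range (n+1),
        poissonBinom (Function.update σ j t) m * Rbar (m+1)
        = (1 - t) * (Qpb σ j m * Rbar (m+1))
          + t * (if m = 0 then 0 else Qpb σ j (m-1) * Rbar (m+1)) := by
      intro m _
      rw [pb_update]
      by_cases hm : m = 0 <;> simp [hm] <;> ring
    rw [Finset.sum_congr rfl step, Finset.sum_add_distrib, ← Finset.mul_sum, ← Finset.mul_sum,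
      Finset.sum_range_succ' (fun m => if m = 0 then 0 else Qpb σ j (m-1) * Rbar (m+1)) n]
    simp only [if_neg (Nat.succ_ne_zero _), Nat.add_sub_cancel, reduceIte, add_zero]
    rw [← hA, ← hB]
    ring
  have hBA : B ≤ A := by
    rw [hA, Finset.sum_range_succ, hQn, zero_mul, add_zero]
    refine Finset.sum_le_sum fun k _ => ?_
    exact mul_le_mul_of_nonneg_left (hmono (k+1) (k+2) (by omega)) (hQnonneg k)
  calc expRate Rbar (Function.update σ j s') = A + s' * (B - A) := key s'
    _ ≤ A + σ j * (B - A) := by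
        have := mul_le_mul_of_nonpos_right h (by linarith : B - A ≤ 0)
        linarith
    _ = expRate Rbar (Function.update σ j (σ j)) := (key (σ j)).symm
    _ = expRate Rbar σ := by rw [Function.update_eq_self]
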